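/- Subduction representation: let g : Fin s → MvPolynomial σ k be a family of nonzero polynomials that is a subalgebra basis for A = Algebra.adjoin k (Set.range g), i.e. for every nonzero a ∈ A the leading term in_m(a) lies in the k-subalgebra generated by { in_m(g i) }. Then for every nonzero polynomial f ∈ MvPolynomial σ k there exist q ∈ MvPolynomial (Fin s) k and r ∈ MvPolynomial σ k such that f = (aeval g) q + r, for every exponent vector d in the support of r the monomial x^d does not lie in in_m(A), and for every exponent vector γ in the support of q one has m.degree(∏ i, (g i)^(γ i)) ≤ m.degree f in the order m. -/

import Mathlib

open MvPolynomial

noncomputable section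

variable {σ : Type*} [Fintype σ] {k : Type*} [Field k]

/-- The degree (largest exponent vector) of a polynomial with respect to a monomial order. -/
def MonomialOrder.degree' (m : MonomialOrder σ) (f : MvPolynomial σ k) : σ →₀ ℕ :=
  m.toSyn.symm (f.support.sup fun d => m.toSyn d)

/-- The leading term of a polynomial with respect to a monomial order. -/
def MonomialOrder.leadTerm (m : MonomialOrder σ) (f : MvPolynomial σ k) : MvPolynomial σ k :=
  monomial (m.degree' f) (f.coeff (m.degree' f))

/-- The initial algebra of a subalgebra `A`: the `k`-subalgebra generated by the leading
terms of the nonzero elements of `A`. -/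
def MonomialOrder.initialAlgebra (m : MonomialOrder σ) (A : Subalgebra k (MvPolynomial σ k)) :
    Subalgebra k (MvPolynomial σ k) :=
  Algebra.adjoin k {p | ∃ a ∈ A, a ≠ 0 ∧ p = m.leadTerm a}

namespace Subduction

variable (m : MonomialOrder σ)

lemma toSyn_degree' (f : MvPolynomial σ k) :
    m.toSyn (m.degree' f) = f.support.sup fun d => m.toSyn d := by
  simp [MonomialOrder.degree']

lemma le_degree' {f : MvPolynomial σ k} {d : σ →₀ ℕ} (hd : d ∈ f.support) :
    m.toSyn d ≤ m.toSyn (m.degree' f) := by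
  rw [toSyn_degree']
  exact Finset.le_sup hd

lemma degree'_mem_support {f : MvPolynomial σ k} (hf : f ≠ 0) :
    m.degree' f ∈ f.support := by
  obtain ⟨d, hd, he⟩ := Finset.exists_mem_eq_sup f.support
    (Finset.nonempty_iff_ne_empty.mpr (MvPolynomial.support_eq_empty.not.mpr hf)) (fun d => m.toSyn d)
  have : m.degree' f = d := by
    rw [MonomialOrder.degree', he]; exact m.toSyn.symm_apply_apply d
  rwa [this]

lemma coeff_degree'_ne_zero {f : MvPolynomial σ k} (hf : f ≠ 0) :
    f.coeff (m.degree' f) ≠ 0 :=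
  mem_support_iff.mp (degree'_mem_support m hf)

lemma degree'_eq_of {f : MvPolynomial σ k} {d : σ →₀ ℕ} (hd : f.coeff d ≠ 0)
    (hmax : ∀ e ∈ f.support, m.toSyn e ≤ m.toSyn d) : m.degree' f = d := by
  apply m.toSyn.injective
  apply le_antisymm
  · rw [toSyn_degree']
    exact Finset.sup_le hmax
  · exact le_degree' m (mem_support_iff.mpr hd)

set_option linter.unusedSectionVars false
set_option maxHeartbeats 1000000

lemma coeff_mul_degree' (f g : MvPolynomial σ k) :
    (f * g).coeff (m.degree' f + m.degree' g) =
      f.coeff (m.degree' f) * g.coeff (m.degree' g) := by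
  have h := AddMonoidAlgebra.apply_add_of_supDegree_le (p := f) (q := g) (D := m.toSyn)
      (fun a b => map_add m.toSyn a b) m.toSyn.injective
      (le_of_eq (toSyn_degree' m f).symm) (le_of_eq (toSyn_degree' m g).symm)
  exact h

lemma degree'_mul {f g : MvPolynomial σ k} (hf : f ≠ 0) (hg : g ≠ 0) :
    m.degree' (f * g) = m.degree' f + m.degree' g := by
  classical
  apply degree'_eq_of
  · rw [coeff_mul_degree']
    exact mul_ne_zero (coeff_degree'_ne_zero m hf) (coeff_degree'_ne_zero m hg)
  · intro e he
    obtain ⟨a, ha, b, hb, rfl⟩ := Finset.mem_add.mp (support_mul f g he)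
    rw [map_add, map_add]
    exact add_le_add (le_degree' m ha) (le_degree' m hb)

lemma degree'_one : m.degree' (1 : MvPolynomial σ k) = 0 := by
  apply degree'_eq_of
  · rw [coeff_zero_one]; exact one_ne_zero
  · intro e he
    classical
    rw [mem_support_iff, coeff_one] at he
    by_cases h0 : e = 0
    · rw [h0]
    · rw [if_neg (fun h : (0 : σ →₀ ℕ) = e => h0 h.symm)] at he
      exact absurd rfl he

lemma degree'_pow {f : MvPolynomial σ k} (hf : f ≠ 0) (n : ℕ) :
    m.degree' (f ^ n) = n • m.degree' f := by
  induction n with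
  | zero =>
    simp only [pow_zero, zero_smul]
    exact degree'_one m
  | succ n ih =>
    rw [pow_succ, degree'_mul m (pow_ne_zero n hf) hf, ih, succ_nsmul]

lemma degree'_prod {ι : Type*} (t : Finset ι) (p : ι → MvPolynomial σ k)
    (hp : ∀ i ∈ t, p i ≠ 0) :
    m.degree' (∏ i ∈ t, p i) = ∑ i ∈ t, m.degree' (p i) := by
  classical
  induction t using Finset.induction with
  | empty => simpa using degree'_one m
  | insert a t' hx ih =>
    rw [Finset.prod_insert hx, Finset.sum_insert hx,
      degree'_mul m (hp a (Finset.mem_insert_self a t'))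
        (Finset.prod_ne_zero_iff.mpr fun i hi => hp i (Finset.mem_insert_of_mem hi)),
      ih (fun i hi => hp i (Finset.mem_insert_of_mem hi))]

lemma degree'_prod_pow {s : ℕ} (g : Fin s → MvPolynomial σ k) (hg : ∀ i, g i ≠ 0)
    (γ : Fin s → ℕ) :
    m.degree' (∏ i, (g i) ^ (γ i)) = ∑ i, γ i • m.degree' (g i) := by
  rw [degree'_prod m Finset.univ (fun i => g i ^ γ i)
    (fun i _ => pow_ne_zero _ (hg i))]
  exact Finset.sum_congr rfl fun i _ => degree'_pow m (hg i) (γ i)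
lemma closure_struct {s : ℕ} (D : Fin s → (σ →₀ ℕ)) (c : Fin s → k)
    {x : MvPolynomial σ k}
    (hx : x ∈ Submonoid.closure (Set.range fun i => monomial (D i) (c i))) :
    ∃ (γ : Fin s → ℕ) (c' : k), x = monomial (∑ i, γ i • D i) c' := by
  classical
  induction hx using Submonoid.closure_induction with
  | mem x hx =>
    obtain ⟨i, rfl⟩ := hx
    refine ⟨fun j => if j = i then 1 else 0, c i, ?_⟩
    rw [Finset.sum_eq_single i]
    · simp
    · intro b _ hb; simp [hb]
    · intro h; exact absurd (Finset.mem_univ i) h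
  | one =>
    exact ⟨0, 1, by simp [monomial_eq]⟩
  | mul x y _ _ ihx ihy =>
    obtain ⟨γ1, c1, rfl⟩ := ihx
    obtain ⟨γ2, c2, rfl⟩ := ihy
    refine ⟨γ1 + γ2, c1 * c2, ?_⟩
    rw [monomial_mul]
    have he : ∑ i, (γ1 + γ2) i • D i = (∑ i, γ1 i • D i) + ∑ i, γ2 i • D i := by
      rw [← Finset.sum_add_distrib]
      exact Finset.sum_congr rfl fun i _ => by rw [Pi.add_apply, add_smul]
    rw [he]

lemma mem_adjoin_monomials {s : ℕ} (D : Fin s → (σ →₀ ℕ)) (c : Fin s → k)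
    {d : σ →₀ ℕ}
    (hd : (monomial d (1 : k)) ∈
      Algebra.adjoin k (Set.range fun i => monomial (D i) (c i))) :
    ∃ γ : Fin s → ℕ, d = ∑ i, γ i • D i := by
  classical
  by_contra hcon
  push_neg at hcon
  rw [← Subalgebra.mem_toSubmodule, Algebra.adjoin_eq_span] at hd
  have hz : ∀ x ∈ Submodule.span k
      ((Submonoid.closure (Set.range fun i => monomial (D i) (c i)) : Submonoid _) :
        Set (MvPolynomial σ k)), coeff d x = 0 := by
    intro x hx
    induction hx using Submodule.span_induction with
    | mem x hx =>
      obtain ⟨γ, c', rfl⟩ := closure_struct D c hx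
      rw [coeff_monomial, if_neg (fun h : ∑ i, γ i • D i = d => hcon γ h.symm)]
    | zero => simp
    | add x y _ _ ihx ihy => simp [ihx, ihy]
    | smul a x _ ihx => simp [ihx]
  have h1 := hz _ hd
  rw [coeff_monomial, if_pos rfl] at h1
  exact one_ne_zero h1
end Subduction

open Subduction in
/-- Subduction representation. -/
theorem subduction_representation (m : MonomialOrder σ) {s : ℕ}
    (g : Fin s → MvPolynomial σ k) (hg : ∀ i, g i ≠ 0)
    (hbasis : ∀ a ∈ Algebra.adjoin k (Set.range g), a ≠ 0 →
      m.leadTerm a ∈ Algebra.adjoin k (Set.range fun i => m.leadTerm (g i)))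
    (f : MvPolynomial σ k) (hf : f ≠ 0) :
    ∃ (q : MvPolynomial (Fin s) k) (r : MvPolynomial σ k),
      f = MvPolynomial.aeval g q + r ∧
      (∀ d ∈ r.support,
        (monomial d (1 : k)) ∉ m.initialAlgebra (Algebra.adjoin k (Set.range g))) ∧
      (∀ γ ∈ q.support,
        m.toSyn (m.degree' (∏ i, (g i) ^ (γ i))) ≤ m.toSyn (m.degree' f)) := by
  classical
  have hIB : m.initialAlgebra (Algebra.adjoin k (Set.range g)) ≤
      Algebra.adjoin k (Set.range fun i => m.leadTerm (g i)) := by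
    apply Algebra.adjoin_le
    rintro p ⟨a, ha, ha0, rfl⟩
    exact hbasis a ha ha0
  suffices H : ∀ t : m.syn, ∀ f : MvPolynomial σ k, f ≠ 0 → m.toSyn (m.degree' f) ≤ t →
      ∃ (q : MvPolynomial (Fin s) k) (r : MvPolynomial σ k),
        f = MvPolynomial.aeval g q + r ∧
        (∀ d ∈ r.support,
          (monomial d (1 : k)) ∉ m.initialAlgebra (Algebra.adjoin k (Set.range g))) ∧
        (∀ γ ∈ q.support,
          m.toSyn (m.degree' (∏ i, (g i) ^ (γ i))) ≤ m.toSyn (m.degree' f)) by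
    exact H _ f hf le_rfl
  intro t
  induction t using WellFoundedLT.induction with
  | ind t IH =>
  intro f hf hft
  by_cases hmem : (monomial (m.degree' f) (1 : k)) ∈
      m.initialAlgebra (Algebra.adjoin k (Set.range g))
  · -- the leading monomial of `f` lies in the initial algebra: subduct by a product of `g`s
    have hmemB : (monomial (m.degree' f) (1 : k)) ∈
        Algebra.adjoin k (Set.range fun i =>
          monomial (m.degree' (g i)) ((g i).coeff (m.degree' (g i)))) := hIB hmem
    obtain ⟨γ, hγ⟩ := mem_adjoin_monomials (fun i => m.degree' (g i))
      (fun i => (g i).coeff (m.degree' (g i))) hmemB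
    set G : MvPolynomial σ k := ∏ i, (g i) ^ (γ i) with hG
    have hG0 : G ≠ 0 := Finset.prod_ne_zero_iff.mpr fun i _ => pow_ne_zero _ (hg i)
    have hdegG : m.degree' G = m.degree' f := by
      rw [hG, degree'_prod_pow m g hg γ, ← hγ]
    set c : k := f.coeff (m.degree' f) / G.coeff (m.degree' G) with hc
    set γ' : Fin s →₀ ℕ := Finsupp.equivFunOnFinite.symm γ with hγ'
    have hγ'app : ∀ i, γ' i = γ i := fun i => rfl
    have hprodγ' : ∏ i, (g i) ^ (γ' i) = G := Finset.prod_congr rfl fun i _ => by rw [hγ'app]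
    have haev : MvPolynomial.aeval g (monomial γ' c) = C c * G := by
      rw [aeval_monomial, algebraMap_eq, Finsupp.prod_pow, hprodγ']
    set f' : MvPolynomial σ k := f - C c * G with hf'def
    have hcoeff0 : f'.coeff (m.degree' f) = 0 := by
      rw [hf'def, coeff_sub, coeff_C_mul, ← hdegG, hc,
        div_mul_cancel₀ _ (coeff_degree'_ne_zero m hG0), hdegG, sub_self]
    have hlt : ∀ d ∈ f'.support, m.toSyn d < m.toSyn (m.degree' f) := by
      intro d hd
      have hle : m.toSyn d ≤ m.toSyn (m.degree' f) := by
        rw [mem_support_iff, hf'def, coeff_sub, coeff_C_mul] at hd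
        by_cases h1 : f.coeff d = 0
        · have h2 : G.coeff d ≠ 0 := by
            intro h2; rw [h1, h2, mul_zero, sub_zero] at hd; exact hd rfl
          have := le_degree' m (mem_support_iff.mpr h2)
          rwa [hdegG] at this
        · exact le_degree' m (mem_support_iff.mpr h1)
      refine lt_of_le_of_ne hle fun he => ?_
      have : d = m.degree' f := m.toSyn.injective he
      rw [this] at hd
      rw [mem_support_iff] at hd
      exact hd hcoeff0
    by_cases hf' : f' = 0
    · refine ⟨monomial γ' c, 0, ?_, ?_, ?_⟩
      · rw [haev, add_zero]
        exact sub_eq_zero.mp (by rw [← hf'def]; exact hf')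
      · simp
      · intro γ'' hγ''
        rw [support_monomial] at hγ''
        split_ifs at hγ'' with hc0
        · exact absurd hγ'' (Finset.notMem_empty _)
        · rw [Finset.mem_singleton] at hγ''
          subst hγ''
          rw [hprodγ', hdegG]
    · have hdlt : m.toSyn (m.degree' f') < m.toSyn (m.degree' f) :=
        hlt _ (degree'_mem_support m hf')
      obtain ⟨q', r', he', hr', hq'⟩ :=
        IH (m.toSyn (m.degree' f')) (lt_of_lt_of_le hdlt hft) f' hf' le_rfl
      refine ⟨q' + monomial γ' c, r', ?_, hr', ?_⟩
      · rw [map_add, haev]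
        have hfe : f = f' + C c * G := by rw [hf'def]; ring
        conv_lhs => rw [hfe, he']
        ring
      · intro γ'' hmemq
        rcases Finset.mem_union.mp (MvPolynomial.support_add hmemq) with h | h
        · exact le_trans (hq' _ h) (le_of_lt hdlt)
        · rw [support_monomial] at h
          split_ifs at h with hc0
          · exact absurd h (Finset.notMem_empty _)
          · rw [Finset.mem_singleton] at h
            subst h
            rw [hprodγ', hdegG]
  · -- the leading monomial of `f` is not in the initial algebra: move it to the remainder
    set f' : MvPolynomial σ k := f - m.leadTerm f with hf'def
    have hcoeff : ∀ d, f'.coeff d = f.coeff d - (if m.degree' f = d then f.coeff (m.degree' f) else 0) := by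
      intro d
      rw [hf'def, coeff_sub, MonomialOrder.leadTerm, coeff_monomial]
    have hcoeff0 : f'.coeff (m.degree' f) = 0 := by
      rw [hcoeff, if_pos rfl, sub_self]
    have hlt : ∀ d ∈ f'.support, m.toSyn d < m.toSyn (m.degree' f) := by
      intro d hd
      rw [mem_support_iff] at hd
      have hne : d ≠ m.degree' f := fun h => hd (h ▸ hcoeff0)
      have hfd : f.coeff d ≠ 0 := by
        rw [hcoeff, if_neg (fun h => hne h.symm), sub_zero] at hd
        exact hd
      exact lt_of_le_of_ne (le_degree' m (mem_support_iff.mpr hfd))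
        (fun he => hne (m.toSyn.injective he))
    by_cases hf' : f' = 0
    · refine ⟨0, f, ?_, ?_, ?_⟩
      · rw [map_zero, zero_add]
      · intro d hd
        have hfl : f = m.leadTerm f := sub_eq_zero.mp (by rw [← hf'def]; exact hf')
        rw [hfl, MonomialOrder.leadTerm, support_monomial,
          if_neg (coeff_degree'_ne_zero m hf), Finset.mem_singleton] at hd
        rwa [hd]
      · intro γ'' hγ''
        simp at hγ''
    · have hdlt : m.toSyn (m.degree' f') < m.toSyn (m.degree' f) :=
        hlt _ (degree'_mem_support m hf')
      obtain ⟨q', r', he', hr', hq'⟩ :=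
        IH (m.toSyn (m.degree' f')) (lt_of_lt_of_le hdlt hft) f' hf' le_rfl
      refine ⟨q', r' + m.leadTerm f, ?_, ?_, ?_⟩
      · have hfe : f = f' + m.leadTerm f := by rw [hf'def]; ring
        conv_lhs => rw [hfe, he']
        ring
      · intro d hd
        rcases Finset.mem_union.mp (MvPolynomial.support_add hd) with h | h
        · exact hr' d h
        · rw [MonomialOrder.leadTerm, support_monomial,
            if_neg (coeff_degree'_ne_zero m hf), Finset.mem_singleton] at h
          rwa [h]
      · intro γ'' hγ''
        exact le_trans (hq' _ hγ'') (le_of_lt hdlt)
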